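/- With the setup of the previous construction (v sorted positive with ‖v‖₁ ≤ C, v(1) ≤ C/k, n > k, and g₀,…,g_k defined via λ_j), each vector g_t satisfies ‖g_t‖₁ = ‖v‖₁ and ‖g_t‖_∞ ≤ C/k, and each g_t has at most n−1 nonzero components. -/

import Mathlib

noncomputable def eta (k : ℕ) (C : ℝ) (v : ℕ → ℝ) (j : ℕ) : ℝ := C / k - v j

noncomputable def lam (k : ℕ) (C : ℝ) (v : ℕ → ℝ) (j : ℕ) : ℝ :=
  eta k C v j / ∑ i ∈ Finset.range k, eta k C v i

noncomputable def g (n k : ℕ) (C : ℝ) (v : ℕ → ℝ) (t : ℕ) (i : ℕ) : ℝ :=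
  if i < k then
    (if i + 1 = t then 0 else v i + lam k C v i * v (n - 1))
  else if i = n - 1 then
    (if t = 0 then 0 else v (t - 1) + lam k C v (t - 1) * v (n - 1))
  else v i

/-- Each `g_t` has the same ℓ₁ norm as `v`, satisfies `‖g_t‖_∞ ≤ C/k`, and has at
most `n - 1` nonzero components (among the first `n` coordinates). -/
theorem g_properties
    (n k : ℕ) (hk : 0 < k) (hkn : k < n) (C : ℝ) (hC : 0 < C)
    (v : ℕ → ℝ)
    (hsort : ∀ i j, i ≤ j → j < n → v j ≤ v i)
    (hpos : ∀ i < n, 0 < v i)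
    (hv1 : ∑ i ∈ Finset.range n, |v i| ≤ C)
    (hmax : v 0 ≤ C / k) :
    ∀ t ≤ k,
      (∑ i ∈ Finset.range n, |g n k C v t i| = ∑ i ∈ Finset.range n, |v i|) ∧
      (∀ i < n, |g n k C v t i| ≤ C / k) ∧
      (∃ s : Finset ℕ, s.card ≤ n - 1 ∧ ∀ i < n, i ∉ s → g n k C v t i = 0) := by
  intro t ht
  set D := ∑ i ∈ Finset.range k, eta k C v i with hDdef
  have hkR : (0:ℝ) < k := by exact_mod_cast hk
  -- basic facts
  have hetann : ∀ i < k, 0 ≤ eta k C v i := by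
    intro i hi
    have h1 : v i ≤ v 0 := hsort 0 i (Nat.zero_le _) (hi.trans hkn)
    simp only [eta]; linarith
  have hvabs : ∑ i ∈ Finset.range n, |v i| = ∑ i ∈ Finset.range n, v i := by
    apply Finset.sum_congr rfl
    intro i hi
    exact abs_of_pos (hpos i (Finset.mem_range.mp hi))
  have hvsum : ∑ i ∈ Finset.range n, v i ≤ C := hvabs ▸ hv1
  have hDeq : D = C - ∑ i ∈ Finset.range k, v i := by
    simp only [hDdef, eta, Finset.sum_sub_distrib, Finset.sum_const, Finset.card_range,
      nsmul_eq_mul]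
    field_simp
  have hsplit : ∑ i ∈ Finset.range n, v i =
      (∑ i ∈ Finset.range k, v i) + (∑ i ∈ Finset.Ico k (n-1), v i) + v (n-1) := by
    have h1 : ∑ i ∈ Finset.range n, v i
        = ∑ i ∈ Finset.range (n-1), v i + v (n-1) := by
      have : n = (n-1) + 1 := by omega
      rw [this, Finset.sum_range_succ]
      congr 1 <;> omega
    rw [h1, Finset.range_eq_Ico, ← Finset.sum_Ico_consecutive _ (Nat.zero_le k) (by omega : k ≤ n-1),
      ← Finset.range_eq_Ico]
  have hIcopos : 0 ≤ ∑ i ∈ Finset.Ico k (n-1), v i :=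
    Finset.sum_nonneg (fun i hi => (hpos i (by have := (Finset.mem_Ico.mp hi).2; omega)).le)
  have hvn1 : 0 < v (n-1) := hpos _ (by omega)
  have hD : 0 < D := by
    rw [hDeq]; linarith [hvn1, hIcopos, hvsum, hsplit]
  have hlamsum : ∑ i ∈ Finset.range k, lam k C v i = 1 := by
    simp only [lam, ← Finset.sum_div, ← hDdef]
    exact div_self hD.ne'
  have hlamnn : ∀ i < k, 0 ≤ lam k C v i := by
    intro i hi
    exact div_nonneg (hetann i hi) hD.le
  have hvn1D : v (n-1) ≤ D := by
    rw [hDeq]; linarith [hIcopos, hvsum, hsplit]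
  -- entries for i < k
  have hentry : ∀ j < k, 0 ≤ v j + lam k C v j * v (n-1) ∧
      v j + lam k C v j * v (n-1) ≤ C / k := by
    intro j hj
    constructor
    · have := hpos j (hj.trans hkn)
      nlinarith [hlamnn j hj, hvn1]
    · have h1 : lam k C v j * v (n-1) ≤ eta k C v j := by
        have : lam k C v j * v (n-1) = eta k C v j * (v (n-1) / D) := by
          simp only [lam, ← hDdef]; field_simp
        rw [this]
        calc eta k C v j * (v (n-1) / D) ≤ eta k C v j * 1 := by
              apply mul_le_mul_of_nonneg_left _ (hetann j hj)
              rw [div_le_one hD]; exact hvn1D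
          _ = eta k C v j := mul_one _
      simp only [eta] at h1
      linarith
  -- entries for k ≤ i < n-1
  have hentry2 : ∀ i, k ≤ i → i < n → v i ≤ C / k := by
    intro i h1 h2
    exact (hsort 0 i (Nat.zero_le _) h2).trans hmax
  -- all entries nonneg
  have hgnn : ∀ i < n, 0 ≤ g n k C v t i := by
    intro i hi
    simp only [g]
    split_ifs with h1 h2 h3 h4
    · exact le_refl 0
    · exact (hentry i h1).1
    · exact le_refl 0
    · exact (hentry (t-1) (by omega)).1
    · exact (hpos i hi).le
  refine ⟨?_, ?_, ?_⟩
  · -- ℓ₁ norm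
    have habs : ∑ i ∈ Finset.range n, |g n k C v t i| = ∑ i ∈ Finset.range n, g n k C v t i := by
      apply Finset.sum_congr rfl
      intro i hi
      exact abs_of_nonneg (hgnn i (Finset.mem_range.mp hi))
    rw [habs, hvabs]
    have hgsplit : ∑ i ∈ Finset.range n, g n k C v t i =
        (∑ i ∈ Finset.range k, g n k C v t i) + (∑ i ∈ Finset.Ico k (n-1), g n k C v t i)
          + g n k C v t (n-1) := by
      have h1 : ∑ i ∈ Finset.range n, g n k C v t i
          = ∑ i ∈ Finset.range (n-1), g n k C v t i + g n k C v t (n-1) := by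
        have : n = (n-1) + 1 := by omega
        rw [this, Finset.sum_range_succ]
        congr 1 <;> omega
      rw [h1, Finset.range_eq_Ico,
        ← Finset.sum_Ico_consecutive _ (Nat.zero_le k) (by omega : k ≤ n-1),
        ← Finset.range_eq_Ico]
    have hmid : ∑ i ∈ Finset.Ico k (n-1), g n k C v t i = ∑ i ∈ Finset.Ico k (n-1), v i := by
      apply Finset.sum_congr rfl
      intro i hi
      obtain ⟨h1, h2⟩ := Finset.mem_Ico.mp hi
      simp only [g]
      rw [if_neg (by omega), if_neg (by omega)]
    have hA : (∑ i ∈ Finset.range k, (v i + lam k C v i * v (n-1)))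
        = (∑ i ∈ Finset.range k, v i) + v (n-1) := by
      rw [Finset.sum_add_distrib, ← Finset.sum_mul, hlamsum, one_mul]
    rw [hgsplit, hmid, hsplit]
    rcases Nat.eq_zero_or_pos t with ht0 | ht1
    · subst ht0
      have hhead : ∑ i ∈ Finset.range k, g n k C v 0 i
          = ∑ i ∈ Finset.range k, (v i + lam k C v i * v (n-1)) := by
        apply Finset.sum_congr rfl
        intro i hi
        simp only [g, if_pos (Finset.mem_range.mp hi)]
        rw [if_neg (by omega)]
      have hlast : g n k C v 0 (n-1) = 0 := by
        simp [g, show ¬ (n-1 < k) by omega]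
      rw [hhead, hlast, hA]; ring
    · have htm : t - 1 ∈ Finset.range k := Finset.mem_range.mpr (by omega)
      have hhead : ∑ i ∈ Finset.range k, g n k C v t i
          = (∑ i ∈ Finset.range k, (v i + lam k C v i * v (n-1)))
            - (v (t-1) + lam k C v (t-1) * v (n-1)) := by
        rw [← Finset.add_sum_erase _ (fun i => g n k C v t i) htm,
          ← Finset.add_sum_erase _ (fun i => v i + lam k C v i * v (n-1)) htm]
        have hz : g n k C v t (t-1) = 0 := by
          simp [g, show t - 1 < k by omega, show t - 1 + 1 = t by omega]
        rw [hz]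
        have : ∑ i ∈ (Finset.range k).erase (t-1), g n k C v t i
            = ∑ i ∈ (Finset.range k).erase (t-1), (v i + lam k C v i * v (n-1)) := by
          apply Finset.sum_congr rfl
          intro i hi
          obtain ⟨hne, hir⟩ := Finset.mem_erase.mp hi
          simp only [g, if_pos (Finset.mem_range.mp hir)]
          rw [if_neg (by omega)]
        rw [this]; ring
      have hlast : g n k C v t (n-1) = v (t-1) + lam k C v (t-1) * v (n-1) := by
        simp [g, show ¬ (n-1 < k) by omega, show t ≠ 0 by omega]
      rw [hhead, hlast, hA]; ring
  · -- ℓ∞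
    intro i hi
    rw [abs_of_nonneg (hgnn i hi)]
    simp only [g]
    split_ifs with h1 h2 h3 h4
    · positivity
    · exact (hentry i h1).2
    · positivity
    · exact (hentry (t-1) (by omega)).2
    · exact hentry2 i (by omega) hi
  · -- support
    refine ⟨(Finset.range n).erase (if t = 0 then n-1 else t-1), ?_, ?_⟩
    · rw [Finset.card_erase_of_mem, Finset.card_range]
      rw [Finset.mem_range]
      split_ifs <;> omega
    · intro i hi hns
      have : i = (if t = 0 then n-1 else t-1) := by
        by_contra hne
        exact hns (Finset.mem_erase.mpr ⟨hne, Finset.mem_range.mpr hi⟩)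
      subst this
      split_ifs with ht0
      · simp [g, ht0, show ¬ (n-1 < k) by omega]
      · simp [g, show t - 1 < k by omega, show t - 1 + 1 = t by omega]
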